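/- Let V be a finite vertex type and G a connected simple graph on V. Then the range of the boundary map ∂ : (E(G) → ZMod 2) →ₗ (V → ZMod 2) equals the subspace of functions g : V → ZMod 2 with Σ_{v ∈ V} g(v) = 0; in particular the range has dimension |V| − 1. -/
import Mathlib


open Finset in
/-- The boundary map over `ZMod 2`: `(∂ f) v` is the sum of `f e` over edges `e` of `G`
incident to `v`. -/
def boundary (V : Type*) [Fintype V] [DecidableEq V]
    (G : SimpleGraph V) [DecidableRel G.Adj] :
    (G.edgeSet → ZMod 2) →ₗ[ZMod 2] (V → ZMod 2) where
  toFun f v := ∑ e : G.edgeSet, if v ∈ (e : Sym2 V) then f e else 0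
  map_add' f g := by
    funext v
    simp only [Pi.add_apply]
    rw [← Finset.sum_add_distrib]
    congr 1; funext e
    split <;> simp
  map_smul' c f := by
    funext v
    simp only [Pi.smul_apply, smul_eq_mul, RingHom.id_apply]
    rw [Finset.mul_sum]
    congr 1; funext e
    split <;> simp

section Aux

variable {V : Type*} [Fintype V] [DecidableEq V]
  (G : SimpleGraph V) [DecidableRel G.Adj]

omit [Fintype V] [DecidableEq V] in
lemma fun_add_self (x : V → ZMod 2) : x + x = 0 := by
  funext v
  exact CharTwo.add_self_eq_zero _

/-- delta function -/
def myDelta (a : V) : V → ZMod 2 := fun v => if v = a then 1 else 0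

lemma boundary_single (e0 : G.edgeSet) :
    boundary V G (fun e => if e = e0 then 1 else 0)
      = fun v => if v ∈ (e0 : Sym2 V) then 1 else 0 := by
  funext v
  show (∑ e : G.edgeSet, if v ∈ (e : Sym2 V) then (if e = e0 then (1:ZMod 2) else 0) else 0) = _
  rw [Finset.sum_eq_single e0]
  · simp
  · intro b _ hb
    simp [hb]
  · simp

lemma deltapair_mem {a b : V} (h : G.Adj a b) :
    myDelta a + myDelta b ∈ LinearMap.range (boundary V G) := by
  refine ⟨fun e => if e = (⟨s(a, b), h⟩ : G.edgeSet) then 1 else 0, ?_⟩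
  rw [boundary_single]
  funext v
  have hab : a ≠ b := h.ne
  simp only [myDelta, Pi.add_apply, Sym2.mem_iff]
  by_cases hva : v = a <;> by_cases hvb : v = b
  · subst hva; exact absurd hvb hab
  · simp [hva, hvb, hab, Ne.symm hab]
  · simp [hva, hvb, hab, Ne.symm hab]
  · simp [hva, hvb, hab, Ne.symm hab]

lemma deltapair_mem_of_reachable {a b : V} (h : G.Reachable a b) :
    myDelta a + myDelta b ∈ LinearMap.range (boundary V G) := by
  obtain ⟨w⟩ := h
  induction w with
  | nil =>
    rw [fun_add_self]
    exact Submodule.zero_mem _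
  | cons h w ih =>
    rename_i u c d
    have h1 := deltapair_mem G h
    have key : (myDelta u + myDelta c) + (myDelta c + myDelta d) = myDelta u + myDelta d := by
      rw [add_assoc, ← add_assoc (myDelta c) (myDelta c), fun_add_self, zero_add]
    rw [← key]
    exact Submodule.add_mem _ h1 ih

end Aux

theorem stmt_6 {V : Type*} [Fintype V] [DecidableEq V]
    (G : SimpleGraph V) [DecidableRel G.Adj] (hG : G.Connected) :
    (∀ g : V → ZMod 2, g ∈ LinearMap.range (boundary V G) ↔ ∑ v : V, g v = 0) ∧
      (Module.finrank (ZMod 2) ↥(LinearMap.range (boundary V G)) : ℤ) =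
        (Fintype.card V : ℤ) - 1 := by
  have hne : Nonempty V := hG.nonempty
  obtain ⟨v0⟩ := hne
  -- sum functional
  let S : (V → ZMod 2) →ₗ[ZMod 2] ZMod 2 :=
    { toFun := fun g => ∑ v, g v
      map_add' := by intro f g; simp [Finset.sum_add_distrib]
      map_smul' := by intro c f; simp [Finset.mul_sum] }
  have hmem : ∀ g : V → ZMod 2, g ∈ LinearMap.range (boundary V G) ↔ ∑ v : V, g v = 0 := by
    intro g
    constructor
    · rintro ⟨f, rfl⟩
      show (∑ v : V, ∑ e : G.edgeSet, if v ∈ (e : Sym2 V) then f e else 0) = 0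
      rw [Finset.sum_comm]
      refine Finset.sum_eq_zero fun e _ => ?_
      obtain ⟨e, he⟩ := e
      induction e with
      | h a b =>
        have hab : a ≠ b := (G.mem_edgeSet.mp he).ne
        have : ∀ v : V, (if v ∈ s(a,b) then f ⟨s(a,b), he⟩ else 0)
            = (if v = a then f ⟨s(a,b), he⟩ else 0) + (if v = b then f ⟨s(a,b), he⟩ else 0) := by
          intro v
          by_cases hva : v = a <;> by_cases hvb : v = b
          · subst hva; exact absurd hvb hab
          · simp [hva, hvb, hab, Ne.symm hab, Sym2.mem_iff]
          · simp [hva, hvb, hab, Ne.symm hab, Sym2.mem_iff]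
          · simp [hva, hvb, hab, Ne.symm hab, Sym2.mem_iff]
        simp only [this, Finset.sum_add_distrib, Finset.sum_ite_eq', Finset.mem_univ, if_true]
        have h2 : (2 : ZMod 2) = 0 := rfl
        rw [show f ⟨s(a,b), he⟩ + f ⟨s(a,b), he⟩ = f ⟨s(a,b), he⟩ * 2 by ring, h2, mul_zero]
    · intro hsum
      have hrep : g = ∑ v : V, g v • (myDelta v + myDelta v0) := by
        funext u
        simp only [Finset.sum_apply, Pi.smul_apply, Pi.add_apply, myDelta, smul_eq_mul,
          mul_add, mul_ite, mul_one, mul_zero, Finset.sum_add_distrib]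
        by_cases h0 : u = v0
        · simp [Finset.sum_ite_eq, h0, hsum]
        · simp [Finset.sum_ite_eq, h0]
      rw [hrep]
      refine Submodule.sum_mem _ fun v _ => Submodule.smul_mem _ _ ?_
      exact deltapair_mem_of_reachable G (hG v v0)
  refine ⟨hmem, ?_⟩
  have hker : LinearMap.range (boundary V G) = LinearMap.ker S := by
    ext g; rw [hmem g]; rfl
  have hsurj : Function.Surjective S := by
    intro c
    refine ⟨c • myDelta v0, ?_⟩
    show (∑ v, (c • myDelta v0) v) = c
    simp [myDelta, Finset.sum_ite_eq', smul_eq_mul, mul_ite]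
  have hrn := LinearMap.finrank_range_add_finrank_ker S
  rw [LinearMap.range_eq_top.mpr hsurj] at hrn
  have h1 : Module.finrank (ZMod 2) (⊤ : Submodule (ZMod 2) (ZMod 2)) = 1 := by
    simp [finrank_top]
  have h2 : Module.finrank (ZMod 2) (V → ZMod 2) = Fintype.card V := by
    simp [Module.finrank_pi]
  rw [h1, h2] at hrn
  rw [hker]
  have hcard : 0 < Fintype.card V := Fintype.card_pos_iff.mpr ⟨v0⟩
  omega
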